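/- arXiv:1610.06054 — 3 statements merged into one kernel-verified Lean document; each statement's English description precedes it below -/
import Mathlib

section
/- Let $r,H>0$ and define $A_E(m,n) = 2mnr\sin(\pi/n)\sqrt{(H/m)^2+r^2(1-\cos(\pi/n))^2}$ for positive integers $m,n$. Then for sequences $m_k, n_k \to \infty$, $A_E(m_k,n_k) \to 2\pi r H$ if and only if $m_k/n_k^2 \to 0$. -/
open Real Filter

lemma schwarz_aux_sin : Tendsto (fun x : ℝ => Real.sin x / x) (nhdsWithin 0 {0}ᶜ) (nhds 1) := by
  have h := Real.hasDerivAt_sin 0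
  rw [hasDerivAt_iff_tendsto_slope] at h
  have h' : Tendsto (fun b : ℝ => b⁻¹ * Real.sin b) (nhdsWithin 0 {0}ᶜ) (nhds 1) := by
    simpa [slope_fun_def, Real.sin_zero, Real.cos_zero] using h
  exact h'.congr fun x => (div_eq_inv_mul _ _).symm

lemma schwarz_aux_cos :
    Tendsto (fun x : ℝ => (1 - Real.cos x) / x ^ 2) (nhdsWithin 0 {0}ᶜ) (nhds (1 / 2)) := by
  have hhalf : Tendsto (fun x : ℝ => x / 2) (nhdsWithin (0:ℝ) {0}ᶜ) (nhdsWithin (0:ℝ) {0}ᶜ) := by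
    refine tendsto_nhdsWithin_of_tendsto_nhds_of_eventually_within _ ?_ ?_
    · have : Tendsto (fun x : ℝ => x / 2) (nhds 0) (nhds 0) := by
        simpa using (continuous_id.div_const (2:ℝ)).tendsto (0:ℝ)
      exact this.mono_left nhdsWithin_le_nhds
    · filter_upwards [self_mem_nhdsWithin] with x hx
      simp only [Set.mem_compl_iff, Set.mem_singleton_iff] at hx ⊢
      exact div_ne_zero hx two_ne_zero
  have h1 : Tendsto (fun x : ℝ => Real.sin (x / 2) / (x / 2)) (nhdsWithin 0 {0}ᶜ) (nhds 1) :=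
    schwarz_aux_sin.comp hhalf
  have h2 : Tendsto (fun x : ℝ => (1/2) * (Real.sin (x/2) / (x/2)) ^ 2)
      (nhdsWithin 0 {0}ᶜ) (nhds (1/2)) := by
    have := (h1.pow 2).const_mul (1/2 : ℝ)
    simpa using this
  refine h2.congr' ?_
  filter_upwards [self_mem_nhdsWithin] with x hx
  simp only [Set.mem_compl_iff, Set.mem_singleton_iff] at hx
  have hs : Real.sin (x/2) ^ 2 = (1 - Real.cos x) / 2 := by
    have h := Real.sin_sq (x/2)
    have h2 := Real.cos_sq (x/2)
    rw [h, h2]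
    have : 2 * (x/2) = x := by ring
    rw [this]; ring
  rw [div_pow, hs]
  have hx2 : x ^ 2 ≠ 0 := pow_ne_zero 2 hx
  field_simp

/-- For Schwarz's lantern with areas
`A_E(m,n) = 2*m*n*r*sin(π/n)*√((H/m)² + r²(1-cos(π/n))²)` and sequences `m_k, n_k → ∞`,
`A_E(m_k, n_k) → 2πrH` if and only if `m_k / n_k² → 0`. -/
theorem schwarz_lantern_limit (r H : ℝ) (hr : 0 < r) (hH : 0 < H)
    (m n : ℕ → ℕ)
    (hm : Tendsto (fun k => m k) atTop atTop) (hn : Tendsto (fun k => n k) atTop atTop) :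
    Tendsto (fun k => 2 * (m k : ℝ) * (n k : ℝ) * r * Real.sin (π / (n k : ℝ)) *
        Real.sqrt ((H / (m k : ℝ)) ^ 2 + r ^ 2 * (1 - Real.cos (π / (n k : ℝ))) ^ 2))
      atTop (nhds (2 * π * r * H)) ↔
    Tendsto (fun k => (m k : ℝ) / (n k : ℝ) ^ 2) atTop (nhds 0) := by
  have hnR : Tendsto (fun k => (n k : ℝ)) atTop atTop := tendsto_natCast_atTop_atTop.comp hn
  have hn1 : ∀ᶠ k in atTop, 1 ≤ n k := hn.eventually_ge_atTop 1
  have hm1 : ∀ᶠ k in atTop, 1 ≤ m k := hm.eventually_ge_atTop 1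
  set t : ℕ → ℝ := fun k => π / (n k : ℝ) with ht_def
  have hnpos : ∀ k, 1 ≤ n k → (0:ℝ) < (n k : ℝ) := by
    intro k hk; exact_mod_cast Nat.lt_of_lt_of_le Nat.zero_lt_one hk
  have ht : Tendsto t atTop (nhdsWithin (0:ℝ) {0}ᶜ) := by
    refine tendsto_nhdsWithin_of_tendsto_nhds_of_eventually_within _ ?_ ?_
    · exact tendsto_const_nhds.div_atTop hnR
    · filter_upwards [hn1] with k hk
      simp only [Set.mem_compl_iff, Set.mem_singleton_iff]
      exact (div_pos Real.pi_pos (hnpos k hk)).ne'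
  -- n sin(π/n) → π
  have hS : Tendsto (fun k => (n k : ℝ) * Real.sin (t k)) atTop (nhds π) := by
    have h1 : Tendsto (fun k => π * (Real.sin (t k) / t k)) atTop (nhds (π * 1)) :=
      ((schwarz_aux_sin.comp ht).const_mul π)
    rw [mul_one] at h1
    refine h1.congr' ?_
    filter_upwards [hn1] with k hk
    have hnk : (n k : ℝ) ≠ 0 := (hnpos k hk).ne'
    simp only [ht_def]
    field_simp
  -- n² (1 - cos(π/n)) → π²/2
  have hC : Tendsto (fun k => (n k : ℝ)^2 * (1 - Real.cos (t k))) atTop (nhds (π^2/2)) := by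
    have h1 : Tendsto (fun k => π^2 * ((1 - Real.cos (t k)) / (t k)^2)) atTop
        (nhds (π^2 * (1/2))) := (schwarz_aux_cos.comp ht).const_mul (π^2)
    have : π^2 * (1/2 : ℝ) = π^2/2 := by ring
    rw [this] at h1
    refine h1.congr' ?_
    filter_upwards [hn1] with k hk
    have hnk : (n k : ℝ) ≠ 0 := (hnpos k hk).ne'
    simp only [ht_def]
    field_simp
  have hCpos : (0:ℝ) < π^2/2 := by positivity
  set u : ℕ → ℝ := fun k => (m k : ℝ) * (1 - Real.cos (t k)) with hu_def
  set B : ℕ → ℝ := fun k => Real.sqrt (H^2 + r^2 * (u k)^2) with hB_def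
  have hcos_lt : ∀ k, 1 ≤ n k → Real.cos (t k) < 1 := by
    intro k hk
    have h1 : (0:ℝ) < t k := div_pos Real.pi_pos (hnpos k hk)
    have h2 : t k ≤ π := by
      rw [ht_def]
      have : (1:ℝ) ≤ (n k : ℝ) := by exact_mod_cast hk
      calc π / (n k : ℝ) ≤ π / 1 := by
            apply div_le_div_of_nonneg_left Real.pi_pos.le one_pos this
          _ = π := by ring
    refine lt_of_le_of_ne (Real.cos_le_one _) ?_
    intro hcon
    have := (Real.cos_eq_one_iff_of_lt_of_lt (x := t k)
      (by nlinarith [Real.pi_pos]) (by nlinarith [Real.pi_pos])).mp hcon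
    exact h1.ne' this
  -- A_E rewritten
  have hAeq : ∀ᶠ k in atTop, (2 * (m k : ℝ) * (n k : ℝ) * r * Real.sin (t k) *
      Real.sqrt ((H / (m k : ℝ)) ^ 2 + r ^ 2 * (1 - Real.cos (t k)) ^ 2))
      = 2 * r * ((n k : ℝ) * Real.sin (t k)) * B k := by
    filter_upwards [hm1] with k hk
    have hmk : (0:ℝ) < (m k : ℝ) := by exact_mod_cast Nat.lt_of_lt_of_le Nat.zero_lt_one hk
    have key : (m k : ℝ) * Real.sqrt ((H / (m k : ℝ)) ^ 2 + r ^ 2 * (1 - Real.cos (t k)) ^ 2)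
        = B k := by
      rw [hB_def, ← Real.sqrt_sq hmk.le, ← Real.sqrt_mul (by positivity)]
      congr 1
      rw [hu_def]
      field_simp
      rw [Real.sq_sqrt (sq_nonneg _)]
    rw [← key]; ring
  constructor
  · intro hA
    have hA' : Tendsto (fun k => 2 * r * ((n k : ℝ) * Real.sin (t k)) * B k)
        atTop (nhds (2 * π * r * H)) := hA.congr' hAeq
    have hD : Tendsto (fun k => 2 * r * ((n k : ℝ) * Real.sin (t k))) atTop (nhds (2 * r * π)) :=
      hS.const_mul (2 * r)
    have hDne : (2 * r * π) ≠ 0 := by positivity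
    have hDev : ∀ᶠ k in atTop, 2 * r * ((n k : ℝ) * Real.sin (t k)) ≠ 0 := by
      have := hD.eventually (eventually_gt_nhds (by positivity : (0:ℝ) < 2 * r * π))
      filter_upwards [this] with k hk
      exact hk.ne'
    have hB : Tendsto B atTop (nhds H) := by
      have hq := hA'.div hD hDne
      have : (2 * π * r * H) / (2 * r * π) = H := by field_simp
      rw [this] at hq
      refine hq.congr' ?_
      filter_upwards [hDev] with k hk
      simp only [Pi.div_apply]
      exact mul_div_cancel_left₀ (B k) hk
    have hB2 : Tendsto (fun k => H^2 + r^2 * (u k)^2) atTop (nhds (H^2)) := by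
      have := hB.pow 2
      refine (by simpa using this : Tendsto (fun k => (B k)^2) atTop (nhds (H^2))).congr ?_
      intro k
      rw [hB_def, Real.sq_sqrt (by positivity)]
    have hu2 : Tendsto (fun k => (u k)^2) atTop (nhds 0) := by
      have h := hB2.sub (tendsto_const_nhds (x := H^2) (f := atTop))
      simp only [sub_self] at h
      have h2 := h.const_mul ((r^2)⁻¹)
      simp only [mul_zero] at h2
      refine h2.congr ?_
      intro k
      have : (r:ℝ)^2 ≠ 0 := by positivity
      field_simp
      ring
    have hu : Tendsto u atTop (nhds 0) := by
      rw [tendsto_zero_iff_abs_tendsto_zero]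
      have := hu2.sqrt
      simp only [Real.sqrt_zero] at this
      refine this.congr ?_
      intro k
      simp [Real.sqrt_sq_eq_abs, Function.comp]
    have hCinv : Tendsto (fun k => ((n k : ℝ)^2 * (1 - Real.cos (t k)))⁻¹) atTop
        (nhds ((π^2/2)⁻¹)) := hC.inv₀ hCpos.ne'
    have hprod := hu.mul hCinv
    rw [zero_mul] at hprod
    refine hprod.congr' ?_
    filter_upwards [hn1] with k hk
    have hnk : (n k : ℝ) ≠ 0 := (hnpos k hk).ne'
    have hc : (1 - Real.cos (t k)) ≠ 0 := by
      have := hcos_lt k hk; linarith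
    rw [hu_def]
    field_simp
  · intro h0
    have hu : Tendsto u atTop (nhds 0) := by
      have := h0.mul hC
      rw [zero_mul] at this
      refine this.congr' ?_
      filter_upwards [hn1] with k hk
      have hnk : (n k : ℝ) ≠ 0 := (hnpos k hk).ne'
      rw [hu_def]
      field_simp
    have hB : Tendsto B atTop (nhds H) := by
      have h1 : Tendsto (fun k => H^2 + r^2 * (u k)^2) atTop (nhds (H^2 + r^2 * 0^2)) :=
        tendsto_const_nhds.add (((hu.pow 2)).const_mul (r^2))
      have h2 := h1.sqrt
      have : Real.sqrt (H^2 + r^2 * 0^2) = H := by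
        simp [Real.sqrt_sq hH.le]
      rw [this] at h2
      exact h2
    have hA' := (hS.const_mul (2 * r)).mul hB
    have : (2 * r * π * H) = 2 * π * r * H := by ring
    rw [this] at hA'
    exact hA'.congr' (Filter.EventuallyEq.symm hAeq)
end

section
/- There is a constant $C=C(p)$ independent of the geometry of the triangle such that for any triangle $K$ with diameter $h_K$ and any $v\in W^{2,p}(K)$, the Crouzeix–Raviart interpolation error satisfies $|v-\mathcal{I}_K^{CR}v|_{1,p,K}\le C h_K |v|_{2,p,K}$. -/
open MeasureTheory ENNReal NNReal Set

/-- Substitution `z ↦ c • z + b` in a lintegral over `ℝ × ℝ`. -/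
lemma lintegral_smul_add (G : ℝ × ℝ → ℝ≥0∞) (hG : Measurable G) {c : ℝ} (hc : c ≠ 0)
    (b : ℝ × ℝ) :
    ∫⁻ z, G (c • z + b) = ENNReal.ofReal |(c ^ 2)⁻¹| * ∫⁻ z, G z := by
  have h1 : (fun z : ℝ × ℝ => c • z + b) = (fun z : ℝ × ℝ => z + b) ∘ (fun z : ℝ × ℝ => c • z) := rfl
  have hmap : Measure.map (fun z : ℝ × ℝ => c • z + b) volume
      = ENNReal.ofReal |(c ^ 2)⁻¹| • volume := by
    rw [h1, ← Measure.map_map (by fun_prop) (by fun_prop)]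
    rw [show (fun z : ℝ × ℝ => c • z) = (c • ·) from rfl,
      MeasureTheory.Measure.map_addHaar_smul volume hc]
    simp only [Measure.map_smul]
    congr 2
    · norm_num [Module.finrank_self]
    · exact MeasureTheory.Measure.IsAddRightInvariant.map_add_right_eq_self b
  calc ∫⁻ z, G (c • z + b)
      = ∫⁻ z, G z ∂(Measure.map (fun z : ℝ × ℝ => c • z + b) volume) := by
        rw [lintegral_map hG (by fun_prop)]
    _ = ENNReal.ofReal |(c ^ 2)⁻¹| * ∫⁻ z, G z := by
        rw [hmap]; simp [lintegral_smul_measure]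

/-- If `c • y + b ∈ K` for all `y ∈ K` and `1/2 ≤ c ≤ 1`, then substitution loses at most a
factor `4`. -/
lemma setLIntegral_comp_le (K : Set (ℝ × ℝ)) (hK : MeasurableSet K)
    (G : ℝ × ℝ → ℝ≥0∞) (hG : Measurable G) {c : ℝ} (hc : 1/2 ≤ c) (hc1 : c ≤ 1)
    (b : ℝ × ℝ) (hmem : ∀ y ∈ K, c • y + b ∈ K) :
    ∫⁻ y in K, G (c • y + b) ≤ 4 * ∫⁻ y in K, G y := by
  have hc0 : c ≠ 0 := by positivity
  have h1 : ∫⁻ y in K, G (c • y + b) = ∫⁻ y in K, (K.indicator G) (c • y + b) := by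
    refine setLIntegral_congr_fun hK (fun y hy => ?_)
    rw [Set.indicator_of_mem (hmem y hy)]
  rw [h1]
  calc ∫⁻ y in K, (K.indicator G) (c • y + b)
      ≤ ∫⁻ y, (K.indicator G) (c • y + b) := setLIntegral_le_lintegral _ _
    _ = ENNReal.ofReal |(c ^ 2)⁻¹| * ∫⁻ y, K.indicator G y :=
        lintegral_smul_add _ (hG.indicator hK) hc0 b
    _ ≤ 4 * ∫⁻ y in K, G y := by
        rw [lintegral_indicator hK]
        gcongr
        rw [abs_inv, abs_of_nonneg (by positivity : (0:ℝ) ≤ c ^ 2)]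
        rw [show (4 : ℝ≥0∞) = ENNReal.ofReal 4 by norm_num]
        apply ENNReal.ofReal_le_ofReal
        rw [inv_le_comm₀ (by positivity) (by norm_num)]
        nlinarith

lemma double_bound (K : Set (ℝ × ℝ)) (hK : MeasurableSet K) (hconv : Convex ℝ K)
    (G : ℝ × ℝ → ℝ≥0∞) (hG : Measurable G) {t : ℝ} (ht0 : 0 ≤ t) (ht1 : t ≤ 1) :
    ∫⁻ x in K, ∫⁻ y in K, G (t • y + (1 - t) • x) ≤ 4 * volume K * ∫⁻ z in K, G z := by
  rcases le_or_gt (1/2) t with h | h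
  · calc ∫⁻ x in K, ∫⁻ y in K, G (t • y + (1 - t) • x)
        ≤ ∫⁻ _x in K, 4 * ∫⁻ z in K, G z := by
          refine setLIntegral_mono' hK fun x hx => ?_
          exact setLIntegral_comp_le K hK G hG h ht1 ((1 - t) • x)
            (fun y hy => hconv hy hx ht0 (by linarith) (by ring))
      _ = 4 * volume K * ∫⁻ z in K, G z := by
          rw [setLIntegral_const]; ring
  · have hswap : ∫⁻ x in K, ∫⁻ y in K, G (t • y + (1 - t) • x)
        = ∫⁻ y in K, ∫⁻ x in K, G (t • y + (1 - t) • x) := by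
      apply lintegral_lintegral_swap
      apply Measurable.aemeasurable
      exact hG.comp (by fun_prop)
    rw [hswap]
    calc ∫⁻ y in K, ∫⁻ x in K, G (t • y + (1 - t) • x)
        ≤ ∫⁻ _y in K, 4 * ∫⁻ z in K, G z := by
          refine setLIntegral_mono' hK fun y hy => ?_
          have : ∀ x, t • y + (1 - t) • x = (1 - t) • x + t • y := fun x => add_comm _ _
          simp_rw [this]
          exact setLIntegral_comp_le K hK G hG (by linarith) (by linarith) (t • y)
            (fun x hx => hconv hx hy (by linarith) ht0 (by ring))
      _ = 4 * volume K * ∫⁻ z in K, G z := by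
          rw [setLIntegral_const]; ring

/-- Jensen-type inequality via Hölder: `(∫ h)^q ≤ (ν univ)^(q-1) * ∫ h^q` for `q ≥ 1`. -/
lemma jensen_rpow {α : Type*} [MeasurableSpace α] (ν : Measure α) (h : α → ℝ≥0∞)
    (hh : AEMeasurable h ν) {q : ℝ} (hq : 1 ≤ q) :
    (∫⁻ a, h a ∂ν) ^ q ≤ ν Set.univ ^ (q - 1) * ∫⁻ a, h a ^ q ∂ν := by
  rcases eq_or_lt_of_le hq with rfl | hq1
  · simp
  · have hq0 : (0:ℝ) < q := by linarith
    have hpq : q.HolderConjugate (q / (q - 1)) := Real.HolderConjugate.conjExponent hq1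
    have hH := ENNReal.lintegral_mul_le_Lp_mul_Lq ν hpq hh aemeasurable_const (g := fun _ => 1)
    simp only [mul_one, ENNReal.one_rpow, lintegral_const, one_mul, Pi.mul_apply,
      Pi.one_def] at hH
    have h2 : (∫⁻ a, h a ∂ν) ^ q
        ≤ ((∫⁻ a, h a ^ q ∂ν) ^ (1/q) * (ν Set.univ) ^ (1/(q/(q-1)))) ^ q :=
      ENNReal.rpow_le_rpow hH (le_of_lt hq0)
    calc (∫⁻ a, h a ∂ν) ^ q
        ≤ ((∫⁻ a, h a ^ q ∂ν) ^ (1/q) * (ν Set.univ) ^ (1/(q/(q-1)))) ^ q := h2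
      _ = (∫⁻ a, h a ^ q ∂ν) ^ ((1/q) * q) * (ν Set.univ) ^ ((1/(q/(q-1))) * q) := by
          rw [ENNReal.mul_rpow_of_nonneg _ _ (le_of_lt hq0), ← ENNReal.rpow_mul,
            ← ENNReal.rpow_mul]
      _ = ν Set.univ ^ (q - 1) * ∫⁻ a, h a ^ q ∂ν := by
          rw [one_div_mul_cancel (ne_of_gt hq0), ENNReal.rpow_one,
            show (1/(q/(q-1))) * q = q - 1 by field_simp, mul_comm]

lemma segment_combo (t : ℝ) (x y : ℝ × ℝ) : x + t • (y - x) = t • y + (1 - t) • x := by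
  rw [smul_sub, sub_smul, one_smul]; abel

/-- FTC along a segment inside a convex set. -/
lemma ftc_segment {K U : Set (ℝ × ℝ)} (hconv : Convex ℝ K) (hU : IsOpen U) (hKU : K ⊆ U)
    {u : ℝ × ℝ → ℝ} (hu : ContDiffOn ℝ 1 u U) (g : ℝ × ℝ → ℝ≥0∞)
    (hg : ∀ z w, (‖fderiv ℝ u z w‖₊ : ℝ≥0∞) ≤ g z * ‖w‖₊)
    {x y : ℝ × ℝ} (hx : x ∈ K) (hy : y ∈ K) :
    (‖u y - u x‖₊ : ℝ≥0∞)
      ≤ (∫⁻ t in Set.Ioc (0:ℝ) 1, g (t • y + (1 - t) • x)) * ‖y - x‖₊ := by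
  have hmem : ∀ t ∈ Set.Icc (0:ℝ) 1, x + t • (y - x) ∈ K := by
    intro t ht
    rw [segment_combo]
    exact hconv hy hx ht.1 (by linarith [ht.2]) (by ring)
  have hd : ∀ t ∈ Set.uIcc (0:ℝ) 1,
      HasDerivAt (fun s => u (x + s • (y - x))) (fderiv ℝ u (x + t • (y - x)) (y - x)) t := by
    intro t ht
    rw [Set.uIcc_of_le zero_le_one] at ht
    have hdiff : DifferentiableAt ℝ u (x + t • (y - x)) :=
      (hu.contDiffAt (hU.mem_nhds (hKU (hmem t ht)))).differentiableAt one_ne_zero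
    have line : HasDerivAt (fun s : ℝ => x + s • (y - x)) (y - x) t := by
      simpa using ((hasDerivAt_id t).smul_const (y - x)).const_add x
    exact hdiff.hasFDerivAt.comp_hasDerivAt t line
  have hγc : Continuous (fun t : ℝ => x + t • (y - x)) := by fun_prop
  have hcont : ContinuousOn (fun t : ℝ => fderiv ℝ u (x + t • (y - x)) (y - x))
      (Set.uIcc (0:ℝ) 1) := by
    rw [Set.uIcc_of_le zero_le_one]
    refine ContinuousOn.clm_apply ?_ continuousOn_const
    exact (hu.continuousOn_fderiv_of_isOpen hU le_rfl).comp hγc.continuousOn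
      (fun t ht => hKU (hmem t ht))
  have hint : IntervalIntegrable (fun t : ℝ => fderiv ℝ u (x + t • (y - x)) (y - x))
      volume 0 1 := hcont.intervalIntegrable
  have heq : ∫ t in (0:ℝ)..1, fderiv ℝ u (x + t • (y - x)) (y - x) = u y - u x := by
    have := intervalIntegral.integral_eq_sub_of_hasDerivAt hd hint
    simpa using this
  calc (‖u y - u x‖₊ : ℝ≥0∞)
      = ‖∫ t in Set.Ioc (0:ℝ) 1, fderiv ℝ u (x + t • (y - x)) (y - x)‖₊ := by
        rw [← intervalIntegral.integral_of_le zero_le_one, heq]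
    _ ≤ ∫⁻ t in Set.Ioc (0:ℝ) 1, ‖fderiv ℝ u (x + t • (y - x)) (y - x)‖₊ :=
        enorm_integral_le_lintegral_enorm _
    _ ≤ ∫⁻ t in Set.Ioc (0:ℝ) 1, g (x + t • (y - x)) * ‖y - x‖₊ :=
        lintegral_mono fun t => hg _ _
    _ = (∫⁻ t in Set.Ioc (0:ℝ) 1, g (t • y + (1 - t) • x)) * ‖y - x‖₊ := by
        simp_rw [segment_combo]
        exact lintegral_mul_const' _ _ ENNReal.coe_ne_top

/-- Comparison with the mean value: `|u x - ū| ≤ (vol K)⁻¹ ∫_K |u x - u y| dy`. -/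
lemma sub_mean_le {K : Set (ℝ × ℝ)} (h0 : volume K ≠ 0) (hfin : volume K ≠ ⊤)
    {u : ℝ × ℝ → ℝ} (hint : IntegrableOn u K volume) {ub : ℝ}
    (hub : ub = (volume K).toReal⁻¹ * ∫ z in K, u z) (x : ℝ × ℝ) :
    (‖u x - ub‖₊ : ℝ≥0∞) ≤ (volume K)⁻¹ * ∫⁻ y in K, (‖u x - u y‖₊ : ℝ≥0∞) := by
  have htR : (0:ℝ) < (volume K).toReal := ENNReal.toReal_pos h0 hfin
  have h1 : u x - ub = (volume K).toReal⁻¹ * ∫ y in K, (u x - u y) := by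
    rw [integral_sub (integrableOn_const (C := u x) hfin) hint, integral_const,
      measureReal_restrict_apply_univ, measureReal_def, smul_eq_mul, hub]
    field_simp
  have h2 : ((volume K).toReal⁻¹.toNNReal : ℝ≥0∞) = (volume K)⁻¹ := by
    rw [← ENNReal.ofReal, ENNReal.ofReal_inv_of_pos htR, ENNReal.ofReal_toReal hfin]
  calc (‖u x - ub‖₊ : ℝ≥0∞)
      = ((volume K).toReal⁻¹.toNNReal : ℝ≥0∞) * ‖∫ y in K, (u x - u y)‖₊ := by
        rw [h1, nnnorm_mul, ENNReal.coe_mul]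
        congr
        rw [Real.nnnorm_of_nonneg (by positivity)]
        ext
        simp [Real.toNNReal, htR.le]
    _ ≤ (volume K)⁻¹ * ∫⁻ y in K, (‖u x - u y‖₊ : ℝ≥0∞) := by
        rw [h2]
        exact mul_le_mul_right (enorm_integral_le_lintegral_enorm _) _

/-- Shape-independent Poincaré–Wirtinger inequality on a convex set in `ℝ²`. -/
lemma poincare {K U : Set (ℝ × ℝ)} (hconv : Convex ℝ K) (hKm : MeasurableSet K)
    (h0 : volume K ≠ 0) (hfin : volume K ≠ ⊤) (hbdd : Bornology.IsBounded K)
    (hU : IsOpen U) (hKU : K ⊆ U)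
    {u : ℝ × ℝ → ℝ} (hu : ContDiffOn ℝ 1 u U) (hint : IntegrableOn u K volume)
    (g : ℝ × ℝ → ℝ≥0∞) (hgm : Measurable g)
    (hg : ∀ z w, (‖fderiv ℝ u z w‖₊ : ℝ≥0∞) ≤ g z * ‖w‖₊)
    {q : ℝ} (hq : 1 ≤ q) {ub : ℝ} (hub : ub = (volume K).toReal⁻¹ * ∫ z in K, u z) :
    ∫⁻ x in K, (‖u x - ub‖₊ : ℝ≥0∞) ^ q
      ≤ 4 * ENNReal.ofReal (Metric.diam K) ^ q * ∫⁻ z in K, g z ^ q := by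
  have hq0 : (0:ℝ) < q := by linarith
  set D := ENNReal.ofReal (Metric.diam K) with hD
  set G : ℝ × ℝ → ℝ≥0∞ := fun z => g z ^ q with hGdef
  have hGm : Measurable G := hgm.pow_const q
  have hDq_ne_top : D ^ q ≠ ⊤ := ENNReal.rpow_ne_top_of_nonneg hq0.le ENNReal.ofReal_ne_top
  have hvq0 : volume K ^ q ≠ 0 := by
    simp [ENNReal.rpow_eq_zero_iff, h0, hfin]
  have hvqt : volume K ^ q ≠ ⊤ := ENNReal.rpow_ne_top_of_nonneg hq0.le hfin
  have hcanc : (volume K)⁻¹ ^ q * volume K ^ (q - 1) = (volume K)⁻¹ := by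
    rw [ENNReal.inv_rpow, ENNReal.rpow_sub _ _ h0 hfin, ENNReal.rpow_one, div_eq_mul_inv,
      ← mul_assoc, ENNReal.inv_mul_cancel hvq0 hvqt, one_mul]
  -- step 1 : pointwise bound via mean comparison and Jensen
  have step1 : ∀ x ∈ K, (‖u x - ub‖₊ : ℝ≥0∞) ^ q
      ≤ (volume K)⁻¹ * ∫⁻ y in K, (‖u x - u y‖₊ : ℝ≥0∞) ^ q := by
    intro x hx
    have hcu : AEMeasurable u (volume.restrict K) :=
      (hu.continuousOn.mono hKU).aemeasurable hKm
    have hmea : AEMeasurable (fun y => (‖u x - u y‖₊ : ℝ≥0∞)) (volume.restrict K) :=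
      (aemeasurable_const.sub hcu).nnnorm.coe_nnreal_ennreal
    have j := jensen_rpow (volume.restrict K) _ hmea hq
    rw [Measure.restrict_apply_univ] at j
    calc (‖u x - ub‖₊ : ℝ≥0∞) ^ q
        ≤ ((volume K)⁻¹ * ∫⁻ y in K, (‖u x - u y‖₊ : ℝ≥0∞)) ^ q :=
          ENNReal.rpow_le_rpow (sub_mean_le h0 hfin hint hub x) hq0.le
      _ = (volume K)⁻¹ ^ q * (∫⁻ y in K, (‖u x - u y‖₊ : ℝ≥0∞)) ^ q :=
          ENNReal.mul_rpow_of_nonneg _ _ hq0.le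
      _ ≤ (volume K)⁻¹ ^ q * (volume K ^ (q - 1) * ∫⁻ y in K, (‖u x - u y‖₊ : ℝ≥0∞) ^ q) :=
          mul_le_mul_right j _
      _ = (volume K)⁻¹ * ∫⁻ y in K, (‖u x - u y‖₊ : ℝ≥0∞) ^ q := by
          rw [← mul_assoc, hcanc]
  -- step 2 : FTC + Jensen in `t`
  have step2 : ∀ x ∈ K, ∫⁻ y in K, (‖u x - u y‖₊ : ℝ≥0∞) ^ q
      ≤ D ^ q * ∫⁻ y in K, ∫⁻ t in Set.Ioc (0:ℝ) 1, G (t • y + (1 - t) • x) := by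
    intro x hx
    have hb : ∀ y ∈ K, (‖u x - u y‖₊ : ℝ≥0∞) ^ q
        ≤ D ^ q * ∫⁻ t in Set.Ioc (0:ℝ) 1, G (t • y + (1 - t) • x) := by
      intro y hy
      have hftc := ftc_segment hconv hU hKU hu g hg hx hy
      have hdist : (‖y - x‖₊ : ℝ≥0∞) ≤ D := by
        rw [← enorm_eq_nnnorm, ← ofReal_norm, ← dist_eq_norm]
        exact ENNReal.ofReal_le_ofReal (Metric.dist_le_diam_of_mem hbdd hy hx)
      have hmeast : AEMeasurable (fun t : ℝ => g (t • y + (1 - t) • x))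
          (volume.restrict (Set.Ioc (0:ℝ) 1)) := (hgm.comp (by fun_prop)).aemeasurable
      have j := jensen_rpow (volume.restrict (Set.Ioc (0:ℝ) 1)) _ hmeast hq
      rw [Measure.restrict_apply_univ, Real.volume_Ioc, sub_zero, ENNReal.ofReal_one,
        ENNReal.one_rpow, one_mul] at j
      calc (‖u x - u y‖₊ : ℝ≥0∞) ^ q
          = (‖u y - u x‖₊ : ℝ≥0∞) ^ q := by
            rw [show u x - u y = -(u y - u x) by ring, nnnorm_neg]
        _ ≤ ((∫⁻ t in Set.Ioc (0:ℝ) 1, g (t • y + (1 - t) • x)) * D) ^ q :=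
            ENNReal.rpow_le_rpow (hftc.trans (mul_le_mul_right hdist _)) hq0.le
        _ = (∫⁻ t in Set.Ioc (0:ℝ) 1, g (t • y + (1 - t) • x)) ^ q * D ^ q :=
            ENNReal.mul_rpow_of_nonneg _ _ hq0.le
        _ ≤ D ^ q * ∫⁻ t in Set.Ioc (0:ℝ) 1, G (t • y + (1 - t) • x) := by
            rw [mul_comm]; exact mul_le_mul_right j _
    calc ∫⁻ y in K, (‖u x - u y‖₊ : ℝ≥0∞) ^ q
        ≤ ∫⁻ y in K, D ^ q * ∫⁻ t in Set.Ioc (0:ℝ) 1, G (t • y + (1 - t) • x) :=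
          setLIntegral_mono' hKm hb
      _ = D ^ q * ∫⁻ y in K, ∫⁻ t in Set.Ioc (0:ℝ) 1, G (t • y + (1 - t) • x) :=
          lintegral_const_mul' _ _ hDq_ne_top
  -- step 3 : combine, swap integrals, change variables
  have hconst_ne_top : (volume K)⁻¹ * D ^ q ≠ ⊤ :=
    ENNReal.mul_ne_top (by simp [h0]) hDq_ne_top
  calc ∫⁻ x in K, (‖u x - ub‖₊ : ℝ≥0∞) ^ q
      ≤ ∫⁻ x in K, (volume K)⁻¹ * D ^ q *
          ∫⁻ y in K, ∫⁻ t in Set.Ioc (0:ℝ) 1, G (t • y + (1 - t) • x) := by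
        refine setLIntegral_mono' hKm fun x hx => ?_
        calc (‖u x - ub‖₊ : ℝ≥0∞) ^ q
            ≤ (volume K)⁻¹ * ∫⁻ y in K, (‖u x - u y‖₊ : ℝ≥0∞) ^ q := step1 x hx
          _ ≤ (volume K)⁻¹ * (D ^ q *
              ∫⁻ y in K, ∫⁻ t in Set.Ioc (0:ℝ) 1, G (t • y + (1 - t) • x)) :=
              mul_le_mul_right (step2 x hx) _
          _ = (volume K)⁻¹ * D ^ q *
              ∫⁻ y in K, ∫⁻ t in Set.Ioc (0:ℝ) 1, G (t • y + (1 - t) • x) := by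
              rw [mul_assoc]
    _ = (volume K)⁻¹ * D ^ q * ∫⁻ x in K,
          ∫⁻ y in K, ∫⁻ t in Set.Ioc (0:ℝ) 1, G (t • y + (1 - t) • x) :=
        lintegral_const_mul' _ _ hconst_ne_top
    _ = (volume K)⁻¹ * D ^ q * ∫⁻ t in Set.Ioc (0:ℝ) 1,
          ∫⁻ x in K, ∫⁻ y in K, G (t • y + (1 - t) • x) := by
        congr 1
        have hswap1 : ∀ x : ℝ × ℝ, ∫⁻ y in K, ∫⁻ t in Set.Ioc (0:ℝ) 1, G (t • y + (1 - t) • x)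
            = ∫⁻ t in Set.Ioc (0:ℝ) 1, ∫⁻ y in K, G (t • y + (1 - t) • x) := by
          intro x
          exact lintegral_lintegral_swap (hGm.comp (by fun_prop)).aemeasurable
        simp_rw [hswap1]
        have hm3 : Measurable (fun p : ((ℝ × ℝ) × ℝ) × (ℝ × ℝ) =>
            G (p.1.2 • p.2 + (1 - p.1.2) • p.1.1)) := hGm.comp (by fun_prop)
        have hmeas2 : Measurable (fun p : (ℝ × ℝ) × ℝ =>
            ∫⁻ y in K, G (p.2 • y + (1 - p.2) • p.1)) := hm3.lintegral_prod_right'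
        exact lintegral_lintegral_swap hmeas2.aemeasurable
    _ ≤ (volume K)⁻¹ * D ^ q * ∫⁻ _t in Set.Ioc (0:ℝ) 1, 4 * volume K * ∫⁻ z in K, G z := by
        refine mul_le_mul_right (setLIntegral_mono' measurableSet_Ioc fun t ht => ?_) _
        exact double_bound K hKm hconv G hGm (le_of_lt ht.1) ht.2
    _ = 4 * D ^ q * ∫⁻ z in K, G z := by
        rw [setLIntegral_const, Real.volume_Ioc, sub_zero, ENNReal.ofReal_one, mul_one,
          show (volume K)⁻¹ * D ^ q * (4 * volume K * ∫⁻ z in K, G z)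
            = ((volume K)⁻¹ * volume K) * (4 * D ^ q * ∫⁻ z in K, G z) by ring,
          ENNReal.inv_mul_cancel h0 hfin, one_mul]

/-- `L^∞` version of the Poincaré inequality. -/
lemma poincare_inf {K U : Set (ℝ × ℝ)} (hconv : Convex ℝ K) (hKm : MeasurableSet K)
    (h0 : volume K ≠ 0) (hfin : volume K ≠ ⊤) (hbdd : Bornology.IsBounded K)
    (hU : IsOpen U) (hKU : K ⊆ U)
    {u : ℝ × ℝ → ℝ} (hu : ContDiffOn ℝ 1 u U) (hint : IntegrableOn u K volume)
    (g : ℝ × ℝ → ℝ≥0∞) (hgm : Measurable g)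
    (hg : ∀ z w, (‖fderiv ℝ u z w‖₊ : ℝ≥0∞) ≤ g z * ‖w‖₊)
    {ub : ℝ} (hub : ub = (volume K).toReal⁻¹ * ∫ z in K, u z) {x : ℝ × ℝ} (hx : x ∈ K) :
    (‖u x - ub‖₊ : ℝ≥0∞)
      ≤ ENNReal.ofReal (Metric.diam K) * essSup g (volume.restrict K) := by
  set D := ENNReal.ofReal (Metric.diam K) with hD
  set S := essSup g (volume.restrict K) with hS
  have hNm : MeasurableSet {z : ℝ × ℝ | ¬ g z ≤ S} := by
    simp only [not_le]
    exact measurableSet_lt measurable_const hgm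
  have hN : volume ({z : ℝ × ℝ | ¬ g z ≤ S} ∩ K) = 0 := by
    have := ae_iff.mp (ae_le_essSup (μ := volume.restrict K) g)
    rwa [Measure.restrict_apply hNm] at this
  have hsec : ∀ t ∈ Set.Ioc (0:ℝ) 1, ∫⁻ y in K, g (t • y + (1 - t) • x) ≤ S * volume K := by
    intro t ht
    have hBadm : MeasurableSet {y : ℝ × ℝ | ¬ g (t • y + (1 - t) • x) ≤ S} := by
      have heq : {y : ℝ × ℝ | ¬ g (t • y + (1 - t) • x) ≤ S}
          = (fun y : ℝ × ℝ => t • y + (1 - t) • x) ⁻¹' {z | ¬ g z ≤ S} := rfl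
      rw [heq]
      exact hNm.preimage (by fun_prop)
    have hbad : (volume.restrict K) {y : ℝ × ℝ | ¬ g (t • y + (1 - t) • x) ≤ S} = 0 := by
      rw [Measure.restrict_apply hBadm]
      have hsub : {y : ℝ × ℝ | ¬ g (t • y + (1 - t) • x) ≤ S} ∩ K
          ⊆ (fun y : ℝ × ℝ => t • y + (1 - t) • x) ⁻¹' ({z | ¬ g z ≤ S} ∩ K) :=
        fun y hy => ⟨hy.1, hconv hy.2 hx ht.1.le (by linarith [ht.2]) (by ring)⟩
      refine measure_mono_null hsub ?_
      have hpre : (fun y : ℝ × ℝ => t • y + (1 - t) • x) ⁻¹' ({z : ℝ × ℝ | ¬ g z ≤ S} ∩ K)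
          = (t • ·) ⁻¹' ((· + (1 - t) • x) ⁻¹' ({z : ℝ × ℝ | ¬ g z ≤ S} ∩ K)) := rfl
      rw [hpre, MeasureTheory.Measure.addHaar_preimage_smul volume (ne_of_gt ht.1),
        measure_preimage_add_right, hN, mul_zero]
    calc ∫⁻ y in K, g (t • y + (1 - t) • x)
        ≤ ∫⁻ _y in K, S := by
          refine lintegral_mono_ae ?_
          rw [ae_iff]
          exact hbad
      _ = S * volume K := by rw [setLIntegral_const]
  have hswap : ∫⁻ y in K, ∫⁻ t in Set.Ioc (0:ℝ) 1, g (t • y + (1 - t) • x)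
      = ∫⁻ t in Set.Ioc (0:ℝ) 1, ∫⁻ y in K, g (t • y + (1 - t) • x) :=
    lintegral_lintegral_swap (hgm.comp (by fun_prop)).aemeasurable
  calc (‖u x - ub‖₊ : ℝ≥0∞)
      ≤ (volume K)⁻¹ * ∫⁻ y in K, (‖u x - u y‖₊ : ℝ≥0∞) := sub_mean_le h0 hfin hint hub x
    _ ≤ (volume K)⁻¹ * ∫⁻ y in K,
          D * ∫⁻ t in Set.Ioc (0:ℝ) 1, g (t • y + (1 - t) • x) := by
        refine mul_le_mul_right (setLIntegral_mono' hKm fun y hy => ?_) _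
        have hftc := ftc_segment hconv hU hKU hu g hg hx hy
        have hdist : (‖y - x‖₊ : ℝ≥0∞) ≤ D := by
          rw [← enorm_eq_nnnorm, ← ofReal_norm, ← dist_eq_norm]
          exact ENNReal.ofReal_le_ofReal (Metric.dist_le_diam_of_mem hbdd hy hx)
        calc (‖u x - u y‖₊ : ℝ≥0∞) = ‖u y - u x‖₊ := by
              rw [show u x - u y = -(u y - u x) by ring, nnnorm_neg]
          _ ≤ (∫⁻ t in Set.Ioc (0:ℝ) 1, g (t • y + (1 - t) • x)) * ‖y - x‖₊ := hftc
          _ ≤ D * ∫⁻ t in Set.Ioc (0:ℝ) 1, g (t • y + (1 - t) • x) := by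
              rw [mul_comm]; exact mul_le_mul_left hdist _
    _ = (volume K)⁻¹ * (D * ∫⁻ y in K, ∫⁻ t in Set.Ioc (0:ℝ) 1, g (t • y + (1 - t) • x)) := by
        rw [lintegral_const_mul' _ _ ENNReal.ofReal_ne_top]
    _ ≤ (volume K)⁻¹ * (D * ∫⁻ _t in Set.Ioc (0:ℝ) 1, S * volume K) := by
        rw [hswap]
        exact mul_le_mul_right (mul_le_mul_right
          (setLIntegral_mono' measurableSet_Ioc hsec) _) _
    _ = D * S := by
        rw [setLIntegral_const, Real.volume_Ioc, sub_zero, ENNReal.ofReal_one, mul_one,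
          show (volume K)⁻¹ * (D * (S * volume K)) = ((volume K)⁻¹ * volume K) * (D * S) by ring,
          ENNReal.inv_mul_cancel h0 hfin, one_mul]

/-- Componentwise bound for a continuous linear functional on `ℝ × ℝ`. -/
lemma clm_bound (D : (ℝ × ℝ) →L[ℝ] ℝ) (w : ℝ × ℝ) :
    (‖D w‖₊ : ℝ≥0∞) ≤ ((‖D (1, 0)‖₊ : ℝ≥0∞) + ‖D (0, 1)‖₊) * ‖w‖₊ := by
  have hw : w = w.1 • ((1:ℝ), (0:ℝ)) + w.2 • ((0:ℝ), (1:ℝ)) := by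
    ext <;> simp
  have h1 : ‖w.1‖ ≤ ‖w‖ := norm_fst_le w
  have h2 : ‖w.2‖ ≤ ‖w‖ := norm_snd_le w
  have hreal : ‖D w‖ ≤ (‖D (1, 0)‖ + ‖D (0, 1)‖) * ‖w‖ := by
    conv_lhs => rw [hw]
    rw [map_add, D.map_smul, D.map_smul, smul_eq_mul, smul_eq_mul]
    have := norm_add_le (w.1 * D (1, 0)) (w.2 * D (0, 1))
    rw [norm_mul, norm_mul] at this
    have hn1 : (0:ℝ) ≤ ‖D (1,0)‖ := norm_nonneg _
    have hn2 : (0:ℝ) ≤ ‖D (0,1)‖ := norm_nonneg _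
    have hn3 : (0:ℝ) ≤ ‖w.1‖ := norm_nonneg _
    have hn4 : (0:ℝ) ≤ ‖w.2‖ := norm_nonneg _
    nlinarith
  calc (‖D w‖₊ : ℝ≥0∞) = ENNReal.ofReal ‖D w‖ := (ofReal_norm _).symm
    _ ≤ ENNReal.ofReal ((‖D (1, 0)‖ + ‖D (0, 1)‖) * ‖w‖) := ENNReal.ofReal_le_ofReal hreal
    _ = ((‖D (1, 0)‖₊ : ℝ≥0∞) + ‖D (0, 1)‖₊) * ‖w‖₊ := by
        rw [ENNReal.ofReal_mul (by positivity), ENNReal.ofReal_add (norm_nonneg _)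
          (norm_nonneg _)]
        simp only [← enorm_eq_nnnorm, ofReal_norm]

/-- Components are bounded by the `∞`-norm. -/
lemma comp_le_nnnorm_inf {n : ℕ} (f : Fin n → ℝ) (i : Fin n) :
    (‖f i‖₊ : ℝ≥0∞) ≤ (‖(WithLp.equiv ⊤ (Fin n → ℝ)).symm f‖₊ : ℝ≥0∞) := by
  rw [PiLp.nnnorm_eq_ciSup]
  refine ENNReal.coe_le_coe.mpr ?_
  have := le_ciSup (f := fun j => ‖(WithLp.equiv ⊤ (Fin n → ℝ)).symm f j‖₊)
    (Set.Finite.bddAbove (Set.finite_range _)) i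
  simpa [WithLp.equiv_symm_apply, PiLp.toLp_apply] using this

/-- The `∞`-norm is bounded by a common bound for the components. -/
lemma nnnorm_inf_le {n : ℕ} (f : Fin n → ℝ) (c : ℝ≥0∞) (h : ∀ i, (‖f i‖₊ : ℝ≥0∞) ≤ c) :
    (‖(WithLp.equiv ⊤ (Fin n → ℝ)).symm f‖₊ : ℝ≥0∞) ≤ c := by
  rw [PiLp.nnnorm_eq_ciSup, ENNReal.coe_iSup (Set.Finite.bddAbove (Set.finite_range _))]
  refine iSup_le fun i => ?_
  simpa [WithLp.equiv_symm_apply, PiLp.toLp_apply] using h i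

/-- Shape-independent first-order error estimate for Crouzeix–Raviart interpolation:
there is `C = C(p)` such that for every triangle `K` with diameter `h_K` and every
`v ∈ W^{2,p}(K)`, `|v - I_K^{CR} v|_{1,p,K} ≤ C h_K |v|_{2,p,K}`.  The gradient of
`I_K^{CR} v` is the mean value `(gx, gy)` of `∇v` over `K`, and seminorms are `L^p` norms
of the vector of first (resp. second) derivatives viewed in `ℓ^p`. -/
theorem crouzeixRaviart_error_first_order (p : ℝ≥0∞) [Fact (1 ≤ p)] :
    ∃ C : ℝ≥0, ∀ (a b c : ℝ × ℝ), AffineIndependent ℝ ![a, b, c] →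
      ∀ (K : Set (ℝ × ℝ)), K = convexHull ℝ {a, b, c} →
      ∀ (v : ℝ × ℝ → ℝ) (U : Set (ℝ × ℝ)), IsOpen U → K ⊆ U →
        ContDiffOn ℝ 2 v U →
        ∀ gx gy : ℝ,
          gx = (volume K).toReal⁻¹ * ∫ z in K, fderiv ℝ v z (1, 0) →
          gy = (volume K).toReal⁻¹ * ∫ z in K, fderiv ℝ v z (0, 1) →
          eLpNorm (fun z => (WithLp.equiv p (Fin 2 → ℝ)).symm
              ![fderiv ℝ v z (1, 0) - gx, fderiv ℝ v z (0, 1) - gy]) p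
              (volume.restrict K) ≤
            (C : ℝ≥0∞) * ENNReal.ofReal (Metric.diam K) *
              eLpNorm (fun z => (WithLp.equiv p (Fin 3 → ℝ)).symm
                ![fderiv ℝ (fun w => fderiv ℝ v w (1, 0)) z (1, 0),
                  fderiv ℝ (fun w => fderiv ℝ v w (1, 0)) z (0, 1),
                  fderiv ℝ (fun w => fderiv ℝ v w (0, 1)) z (0, 1)]) p
                (volume.restrict K) := by
  refine ⟨16, ?_⟩
  intro a b c habc K hKdef v U hUopen hKU hv gx gy hgx hgy
  have hp1 : (1 : ℝ≥0∞) ≤ p := Fact.out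
  have hp0 : p ≠ 0 := (zero_lt_one.trans_le hp1).ne'
  -- geometry of the triangle
  have habc' : ({a, b, c} : Set (ℝ × ℝ)) = Set.range ![a, b, c] := by
    ext z
    constructor
    · rintro (rfl | rfl | rfl)
      exacts [⟨0, rfl⟩, ⟨1, rfl⟩, ⟨2, rfl⟩]
    · rintro ⟨i, rfl⟩
      fin_cases i <;> simp [Set.mem_insert_iff]
  have hconv : Convex ℝ K := hKdef ▸ convex_convexHull ℝ _
  have hcomp : IsCompact K := by
    rw [hKdef]
    exact (Set.toFinite _).isCompact_convexHull ℝ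
  have hKm : MeasurableSet K := hcomp.isClosed.measurableSet
  have hfin : volume K ≠ ⊤ := hcomp.measure_lt_top.ne
  have hbdd : Bornology.IsBounded K := hcomp.isBounded
  have h0 : volume K ≠ 0 := by
    have hspan : affineSpan ℝ (Set.range ![a, b, c]) = ⊤ := by
      rw [habc.affineSpan_eq_top_iff_card_eq_finrank_add_one]
      simp [Module.finrank_prod]
    have hintne : (interior K).Nonempty := by
      rw [hKdef, habc']
      rw [(convex_convexHull ℝ _).interior_nonempty_iff_affineSpan_eq_top]
      rwa [affineSpan_convexHull]
    have hpos : 0 < volume K :=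
      lt_of_lt_of_le (isOpen_interior.measure_pos volume hintne)
        (measure_mono interior_subset)
    exact hpos.ne'
  -- the two first-order partial derivatives
  set u1 : ℝ × ℝ → ℝ := fun w => fderiv ℝ v w (1, 0) with hu1def
  set u2 : ℝ × ℝ → ℝ := fun w => fderiv ℝ v w (0, 1) with hu2def
  have hvC1 : ContDiffOn ℝ 1 (fderiv ℝ v) U := hv.fderiv_of_isOpen hUopen (by norm_num)
  have hu1 : ContDiffOn ℝ 1 u1 U := hvC1.clm_apply contDiffOn_const
  have hu2 : ContDiffOn ℝ 1 u2 U := hvC1.clm_apply contDiffOn_const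
  have hint1 : IntegrableOn u1 K volume :=
    (hu1.continuousOn.mono hKU).integrableOn_compact hcomp
  have hint2 : IntegrableOn u2 K volume :=
    (hu2.continuousOn.mono hKU).integrableOn_compact hcomp
  set g1 : ℝ × ℝ → ℝ≥0∞ :=
    fun z => (‖fderiv ℝ u1 z (1, 0)‖₊ : ℝ≥0∞) + ‖fderiv ℝ u1 z (0, 1)‖₊ with hg1def
  set g2 : ℝ × ℝ → ℝ≥0∞ :=
    fun z => (‖fderiv ℝ u2 z (1, 0)‖₊ : ℝ≥0∞) + ‖fderiv ℝ u2 z (0, 1)‖₊ with hg2def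
  have hg1m : Measurable g1 :=
    ((measurable_fderiv_apply_const ℝ u1 _).nnnorm.coe_nnreal_ennreal).add
      ((measurable_fderiv_apply_const ℝ u1 _).nnnorm.coe_nnreal_ennreal)
  have hg2m : Measurable g2 :=
    ((measurable_fderiv_apply_const ℝ u2 _).nnnorm.coe_nnreal_ennreal).add
      ((measurable_fderiv_apply_const ℝ u2 _).nnnorm.coe_nnreal_ennreal)
  have hg1 : ∀ z w, (‖fderiv ℝ u1 z w‖₊ : ℝ≥0∞) ≤ g1 z * ‖w‖₊ := fun z w => clm_bound _ w
  have hg2 : ∀ z w, (‖fderiv ℝ u2 z w‖₊ : ℝ≥0∞) ≤ g2 z * ‖w‖₊ := fun z w => clm_bound _ w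
  -- symmetry of second derivatives
  have hsym : ∀ z ∈ U, fderiv ℝ u2 z (1, 0) = fderiv ℝ u1 z (0, 1) := by
    intro z hz
    have hz2 : ContDiffAt ℝ 2 v z := hv.contDiffAt (hUopen.mem_nhds hz)
    have hsymm := hz2.isSymmSndFDerivAt (by simp)
    have hvd : DifferentiableAt ℝ (fderiv ℝ v) z :=
      (hz2.fderiv_right (m := 1) le_rfl).differentiableAt one_ne_zero
    have e1 : fderiv ℝ u2 z (1, 0) = fderiv ℝ (fderiv ℝ v) z (1, 0) (0, 1) := by
      rw [hu2def, fderiv_clm_apply hvd (differentiableAt_const _)]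
      simp
    have e2 : fderiv ℝ u1 z (0, 1) = fderiv ℝ (fderiv ℝ v) z (0, 1) (1, 0) := by
      rw [hu1def, fderiv_clm_apply hvd (differentiableAt_const _)]
      simp
    rw [e1, e2, hsymm]
  set D := ENNReal.ofReal (Metric.diam K) with hD
  rcases eq_or_ne p ⊤ with hp | hp
  · subst hp
    rw [eLpNorm_exponent_top, eLpNorm_exponent_top]
    set V : ℝ × ℝ → ℝ≥0∞ := fun z => (‖(WithLp.equiv ⊤ (Fin 3 → ℝ)).symm
      ![fderiv ℝ u1 z (1, 0), fderiv ℝ u1 z (0, 1), fderiv ℝ u2 z (0, 1)]‖₊ : ℝ≥0∞) with hVdef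
    set M := essSup V (volume.restrict K) with hM
    have hc0 : ∀ z, (‖fderiv ℝ u1 z (1, 0)‖₊ : ℝ≥0∞) ≤ V z := fun z => by
      rw [hVdef]
      exact comp_le_nnnorm_inf
        ![fderiv ℝ u1 z (1, 0), fderiv ℝ u1 z (0, 1), fderiv ℝ u2 z (0, 1)] 0
    have hc1 : ∀ z, (‖fderiv ℝ u1 z (0, 1)‖₊ : ℝ≥0∞) ≤ V z := fun z => by
      rw [hVdef]
      exact comp_le_nnnorm_inf
        ![fderiv ℝ u1 z (1, 0), fderiv ℝ u1 z (0, 1), fderiv ℝ u2 z (0, 1)] 1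
    have hc2 : ∀ z, (‖fderiv ℝ u2 z (0, 1)‖₊ : ℝ≥0∞) ≤ V z := fun z => by
      rw [hVdef]
      exact comp_le_nnnorm_inf
        ![fderiv ℝ u1 z (1, 0), fderiv ℝ u1 z (0, 1), fderiv ℝ u2 z (0, 1)] 2
    have hS1 : essSup g1 (volume.restrict K) ≤ 2 * M := by
      refine essSup_le_of_ae_le _ ?_
      filter_upwards [ae_le_essSup (μ := volume.restrict K) V] with z hz
      calc g1 z ≤ V z + V z := add_le_add (hc0 z) (hc1 z)
        _ = 2 * V z := (two_mul _).symm
        _ ≤ 2 * M := mul_le_mul_right hz _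
    have hS2 : essSup g2 (volume.restrict K) ≤ 2 * M := by
      refine essSup_le_of_ae_le _ ?_
      filter_upwards [ae_le_essSup (μ := volume.restrict K) V, ae_restrict_mem hKm]
        with z hz hzK
      have hg2z : g2 z = (‖fderiv ℝ u1 z (0, 1)‖₊ : ℝ≥0∞) + ‖fderiv ℝ u2 z (0, 1)‖₊ := by
        rw [hg2def]
        dsimp only
        rw [hsym z (hKU hzK)]
      rw [hg2z]
      calc (‖fderiv ℝ u1 z (0, 1)‖₊ : ℝ≥0∞) + ‖fderiv ℝ u2 z (0, 1)‖₊
          ≤ V z + V z := add_le_add (hc1 z) (hc2 z)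
        _ = 2 * V z := (two_mul _).symm
        _ ≤ 2 * M := mul_le_mul_right hz _
    have hbound : ∀ x ∈ K, (‖(WithLp.equiv ⊤ (Fin 2 → ℝ)).symm
        ![u1 x - gx, u2 x - gy]‖₊ : ℝ≥0∞) ≤ 2 * (D * M) := by
      intro x hx
      refine nnnorm_inf_le _ _ fun i => ?_
      have hb1 : (‖u1 x - gx‖₊ : ℝ≥0∞) ≤ 2 * (D * M) := by
        calc (‖u1 x - gx‖₊ : ℝ≥0∞)
            ≤ D * essSup g1 (volume.restrict K) :=
              poincare_inf hconv hKm h0 hfin hbdd hUopen hKU hu1 hint1 g1 hg1m hg1 hgx hx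
          _ ≤ D * (2 * M) := mul_le_mul_right hS1 _
          _ = 2 * (D * M) := by ring
      have hb2 : (‖u2 x - gy‖₊ : ℝ≥0∞) ≤ 2 * (D * M) := by
        calc (‖u2 x - gy‖₊ : ℝ≥0∞)
            ≤ D * essSup g2 (volume.restrict K) :=
              poincare_inf hconv hKm h0 hfin hbdd hUopen hKU hu2 hint2 g2 hg2m hg2 hgy hx
          _ ≤ D * (2 * M) := mul_le_mul_right hS2 _
          _ = 2 * (D * M) := by ring
      fin_cases i <;> simpa using (by assumption : _)
    calc eLpNormEssSup (fun z => (WithLp.equiv ⊤ (Fin 2 → ℝ)).symm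
          ![u1 z - gx, u2 z - gy]) (volume.restrict K)
        ≤ 2 * (D * M) :=
          essSup_le_of_ae_le _ ((ae_restrict_iff' hKm).mpr (ae_of_all _ hbound))
      _ ≤ ((16:ℝ≥0) : ℝ≥0∞) * D * eLpNormEssSup (fun z => (WithLp.equiv ⊤ (Fin 3 → ℝ)).symm
          ![fderiv ℝ u1 z (1, 0), fderiv ℝ u1 z (0, 1), fderiv ℝ u2 z (0, 1)])
          (volume.restrict K) := by
        have hMe : eLpNormEssSup (fun z => (WithLp.equiv ⊤ (Fin 3 → ℝ)).symm
            ![fderiv ℝ u1 z (1, 0), fderiv ℝ u1 z (0, 1), fderiv ℝ u2 z (0, 1)])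
            (volume.restrict K) = M := rfl
        rw [hMe, show ((16:ℝ≥0) : ℝ≥0∞) = 16 by norm_cast, ← mul_assoc]
        exact mul_le_mul_left (mul_le_mul_left (by norm_num) D) M
  · -- finite exponent
    set q := p.toReal with hqdef
    have hq : 1 ≤ q := by
      rw [hqdef, ← ENNReal.toReal_one]
      exact ENNReal.toReal_mono hp hp1
    have hq0 : (0:ℝ) < q := by linarith
    rw [eLpNorm_eq_lintegral_rpow_enorm_toReal hp0 hp, eLpNorm_eq_lintegral_rpow_enorm_toReal hp0 hp]
    simp only [enorm_eq_nnnorm]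
    have hFpt : ∀ z : ℝ × ℝ,
        ((‖(WithLp.equiv p (Fin 2 → ℝ)).symm ![u1 z - gx, u2 z - gy]‖₊ : ℝ≥0∞)) ^ q
          = (‖u1 z - gx‖₊ : ℝ≥0∞) ^ q + (‖u2 z - gy‖₊ : ℝ≥0∞) ^ q := by
      intro z
      rw [PiLp.nnnorm_eq_sum hp, ENNReal.coe_rpow_of_nonneg _ (by positivity : (0:ℝ) ≤ 1/q),
        ← ENNReal.rpow_mul, one_div_mul_cancel hq0.ne', ENNReal.rpow_one,
        ENNReal.coe_finset_sum, Fin.sum_univ_two]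
      simp [WithLp.equiv_symm_apply, PiLp.toLp_apply, ← hqdef, ENNReal.coe_rpow_of_nonneg _ hq0.le]
    have hGpt : ∀ z : ℝ × ℝ,
        ((‖(WithLp.equiv p (Fin 3 → ℝ)).symm
            ![fderiv ℝ u1 z (1, 0), fderiv ℝ u1 z (0, 1), fderiv ℝ u2 z (0, 1)]‖₊ : ℝ≥0∞)) ^ q
          = (‖fderiv ℝ u1 z (1, 0)‖₊ : ℝ≥0∞) ^ q + (‖fderiv ℝ u1 z (0, 1)‖₊ : ℝ≥0∞) ^ q
            + (‖fderiv ℝ u2 z (0, 1)‖₊ : ℝ≥0∞) ^ q := by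
      intro z
      rw [PiLp.nnnorm_eq_sum hp, ENNReal.coe_rpow_of_nonneg _ (by positivity : (0:ℝ) ≤ 1/q),
        ← ENNReal.rpow_mul, one_div_mul_cancel hq0.ne', ENNReal.rpow_one,
        ENNReal.coe_finset_sum, Fin.sum_univ_three]
      simp [WithLp.equiv_symm_apply, PiLp.toLp_apply, ← hqdef, ENNReal.coe_rpow_of_nonneg _ hq0.le]
    set B := ∫⁻ z in K, ((‖(WithLp.equiv p (Fin 3 → ℝ)).symm
        ![fderiv ℝ u1 z (1, 0), fderiv ℝ u1 z (0, 1), fderiv ℝ u2 z (0, 1)]‖₊ : ℝ≥0∞)) ^ q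
      with hB
    -- bounds for g1, g2 against the full second-derivative vector
    have hcomp1 : ∀ z ∈ K, g1 z ^ q ≤ (2:ℝ≥0∞) ^ q *
        ((‖(WithLp.equiv p (Fin 3 → ℝ)).symm
          ![fderiv ℝ u1 z (1, 0), fderiv ℝ u1 z (0, 1), fderiv ℝ u2 z (0, 1)]‖₊ : ℝ≥0∞)) ^ q := by
      intro z _
      rw [← ENNReal.mul_rpow_of_nonneg _ _ hq0.le]
      refine ENNReal.rpow_le_rpow ?_ hq0.le
      have hV := hGpt z
      set V := ((‖(WithLp.equiv p (Fin 3 → ℝ)).symm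
          ![fderiv ℝ u1 z (1, 0), fderiv ℝ u1 z (0, 1), fderiv ℝ u2 z (0, 1)]‖₊ : ℝ≥0∞))
      have h1 : (‖fderiv ℝ u1 z (1, 0)‖₊ : ℝ≥0∞) ≤ V := by
        rw [← ENNReal.rpow_le_rpow_iff hq0, hV]
        exact le_add_right (le_add_right le_rfl)
      have h2 : (‖fderiv ℝ u1 z (0, 1)‖₊ : ℝ≥0∞) ≤ V := by
        rw [← ENNReal.rpow_le_rpow_iff hq0, hV]
        exact le_add_right (self_le_add_left _ _)
      calc g1 z ≤ V + V := add_le_add h1 h2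
        _ = 2 * V := (two_mul V).symm
    have hcomp2 : ∀ z ∈ K, g2 z ^ q ≤ (2:ℝ≥0∞) ^ q *
        ((‖(WithLp.equiv p (Fin 3 → ℝ)).symm
          ![fderiv ℝ u1 z (1, 0), fderiv ℝ u1 z (0, 1), fderiv ℝ u2 z (0, 1)]‖₊ : ℝ≥0∞)) ^ q := by
      intro z hz
      rw [← ENNReal.mul_rpow_of_nonneg _ _ hq0.le]
      refine ENNReal.rpow_le_rpow ?_ hq0.le
      have hV := hGpt z
      set V := ((‖(WithLp.equiv p (Fin 3 → ℝ)).symm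
          ![fderiv ℝ u1 z (1, 0), fderiv ℝ u1 z (0, 1), fderiv ℝ u2 z (0, 1)]‖₊ : ℝ≥0∞))
      have h1 : (‖fderiv ℝ u2 z (1, 0)‖₊ : ℝ≥0∞) ≤ V := by
        rw [hsym z (hKU hz), ← ENNReal.rpow_le_rpow_iff hq0, hV]
        exact le_add_right (self_le_add_left _ _)
      have h2 : (‖fderiv ℝ u2 z (0, 1)‖₊ : ℝ≥0∞) ≤ V := by
        rw [← ENNReal.rpow_le_rpow_iff hq0, hV]
        exact self_le_add_left _ _
      calc g2 z ≤ V + V := add_le_add h1 h2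
        _ = 2 * V := (two_mul V).symm
    have hL1 := poincare hconv hKm h0 hfin hbdd hUopen hKU hu1 hint1 g1 hg1m hg1 hq hgx
    have hL2 := poincare hconv hKm h0 hfin hbdd hUopen hKU hu2 hint2 g2 hg2m hg2 hq hgy
    have hmain : ∫⁻ z in K,
        ((‖(WithLp.equiv p (Fin 2 → ℝ)).symm ![u1 z - gx, u2 z - gy]‖₊ : ℝ≥0∞)) ^ q
          ≤ (16:ℝ≥0∞) ^ q * (D ^ q * B) := by
      have hmeas1 : Measurable fun z => (‖u1 z - gx‖₊ : ℝ≥0∞) ^ q :=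
        (((measurable_fderiv_apply_const ℝ v _).sub
          measurable_const).nnnorm.coe_nnreal_ennreal).pow_const q
      calc ∫⁻ z in K,
          ((‖(WithLp.equiv p (Fin 2 → ℝ)).symm ![u1 z - gx, u2 z - gy]‖₊ : ℝ≥0∞)) ^ q
          = ∫⁻ z in K, ((‖u1 z - gx‖₊ : ℝ≥0∞) ^ q + (‖u2 z - gy‖₊ : ℝ≥0∞) ^ q) := by
            simp_rw [hFpt]
        _ = (∫⁻ z in K, (‖u1 z - gx‖₊ : ℝ≥0∞) ^ q)
            + ∫⁻ z in K, (‖u2 z - gy‖₊ : ℝ≥0∞) ^ q := lintegral_add_left hmeas1 _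
        _ ≤ (4 * D ^ q * ∫⁻ z in K, g1 z ^ q) + (4 * D ^ q * ∫⁻ z in K, g2 z ^ q) :=
            add_le_add hL1 hL2
        _ ≤ (4 * D ^ q * ((2:ℝ≥0∞) ^ q * B)) + (4 * D ^ q * ((2:ℝ≥0∞) ^ q * B)) := by
            refine add_le_add (mul_le_mul_right ?_ _) (mul_le_mul_right ?_ _)
            · calc ∫⁻ z in K, g1 z ^ q ≤ ∫⁻ z in K, (2:ℝ≥0∞) ^ q *
                  ((‖(WithLp.equiv p (Fin 3 → ℝ)).symm ![fderiv ℝ u1 z (1, 0),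
                    fderiv ℝ u1 z (0, 1), fderiv ℝ u2 z (0, 1)]‖₊ : ℝ≥0∞)) ^ q :=
                  setLIntegral_mono' hKm hcomp1
                _ = (2:ℝ≥0∞) ^ q * B := lintegral_const_mul' _ _
                  (ENNReal.rpow_ne_top_of_nonneg hq0.le (by norm_num))
            · calc ∫⁻ z in K, g2 z ^ q ≤ ∫⁻ z in K, (2:ℝ≥0∞) ^ q *
                  ((‖(WithLp.equiv p (Fin 3 → ℝ)).symm ![fderiv ℝ u1 z (1, 0),
                    fderiv ℝ u1 z (0, 1), fderiv ℝ u2 z (0, 1)]‖₊ : ℝ≥0∞)) ^ q :=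
                  setLIntegral_mono' hKm hcomp2
                _ = (2:ℝ≥0∞) ^ q * B := lintegral_const_mul' _ _
                  (ENNReal.rpow_ne_top_of_nonneg hq0.le (by norm_num))
        _ = ((8:ℝ≥0∞) * (2:ℝ≥0∞) ^ q) * (D ^ q * B) := by ring
        _ ≤ (16:ℝ≥0∞) ^ q * (D ^ q * B) := by
            refine mul_le_mul_left ?_ _
            have h8 : (8:ℝ≥0∞) = (2:ℝ≥0∞) ^ (3:ℝ) := by
              rw [show (3:ℝ) = ((3:ℕ):ℝ) by norm_num, ENNReal.rpow_natCast]; norm_num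
            have h16 : (16:ℝ≥0∞) = (2:ℝ≥0∞) ^ (4:ℝ) := by
              rw [show (4:ℝ) = ((4:ℕ):ℝ) by norm_num, ENNReal.rpow_natCast]; norm_num
            rw [h8, h16, ← ENNReal.rpow_add _ _ (by norm_num) (by norm_num),
              ← ENNReal.rpow_mul]
            exact ENNReal.rpow_le_rpow_of_exponent_le (by norm_num) (by linarith)
    calc (∫⁻ z in K,
        ((‖(WithLp.equiv p (Fin 2 → ℝ)).symm ![u1 z - gx, u2 z - gy]‖₊ : ℝ≥0∞)) ^ q) ^ (1/q)
        ≤ ((16:ℝ≥0∞) ^ q * (D ^ q * B)) ^ (1/q) :=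
          ENNReal.rpow_le_rpow hmain (by positivity)
      _ = 16 * (D * B ^ (1/q)) := by
          rw [ENNReal.mul_rpow_of_nonneg _ _ (by positivity : (0:ℝ) ≤ 1/q),
            ENNReal.mul_rpow_of_nonneg _ _ (by positivity : (0:ℝ) ≤ 1/q),
            ← ENNReal.rpow_mul, ← ENNReal.rpow_mul, mul_one_div_cancel hq0.ne',
            ENNReal.rpow_one, ENNReal.rpow_one]
      _ = (16:ℝ≥0) * D * B ^ (1/q) := by
          rw [← mul_assoc]
          norm_num
end

section
/- Let $K$ be a triangle obtained from the right triangle $K_1$ with legs along the axes of lengths $h_1\ge h_2>0$ by the linear map $A=\begin{pmatrix}1&s\\0&t\end{pmatrix}$, $s^2+t^2=1$, $t>0$. For $\hat v\in W^{1,\infty}(K_1)$ and $v(\mathbf{x}):=\hat v(A^{-1}\mathbf{x})$ on $K$, the Lagrange interpolants satisfy $|\mathcal{I}_K^L v|_{1,\infty,K} \le \frac{4}{\sin\theta_K}|v|_{1,\infty,K}$, where $\theta_K$ is the maximum inner angle of $K$. -/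
open Real

/-- The (unoriented) angle between two vectors of `ℝ²`. -/
noncomputable def vecAngle (u v : ℝ × ℝ) : ℝ :=
  Real.arccos ((u.1 * v.1 + u.2 * v.2) /
    (Real.sqrt (u.1 ^ 2 + u.2 ^ 2) * Real.sqrt (v.1 ^ 2 + v.2 ^ 2)))

/-- Auxiliary algebraic estimate for the interpolation coefficients. -/
lemma lagrange_coeff_bound (h₁ h₂ s t M P Q R : ℝ) (a₁ a₂ a₃ : ℝ)
    (hh₂ : 0 < h₂) (hh : h₂ ≤ h₁) (hst : s ^ 2 + t ^ 2 = 1) (ht : 0 < t) (hM0 : 0 ≤ M)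
    (h21 : |a₂ - a₁| ≤ 2 * M * h₁) (h31 : |a₃ - a₁| ≤ 2 * M * h₂)
    (hI₁ : P * 0 + Q * 0 + R = a₁) (hI₂ : P * h₁ + Q * 0 + R = a₂)
    (hI₃ : P * (h₂ * s) + Q * (h₂ * t) + R = a₃) :
    max |P| |Q| ≤ 4 / t * M := by
  have hh₁ : (0:ℝ) < h₁ := lt_of_lt_of_le hh₂ hh
  have ht1 : t ≤ 1 := by nlinarith [sq_nonneg s]
  have hs1 : |s| ≤ 1 := abs_le.2 ⟨by nlinarith, by nlinarith⟩
  have hR : R = a₁ := by linarith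
  have hP : P = (a₂ - a₁) / h₁ := by rw [eq_div_iff hh₁.ne']; linarith
  have hPle : |P| ≤ 2 * M := by
    rw [hP, abs_div, abs_of_pos hh₁, div_le_iff₀ hh₁]
    linarith
  have hQ : Q = (a₃ - a₁ - P * (h₂ * s)) / (h₂ * t) := by
    rw [eq_div_iff (by positivity : (h₂ * t) ≠ 0)]; linarith
  have hs' : h₂ * |s| ≤ h₂ := by
    calc h₂ * |s| ≤ h₂ * 1 := mul_le_mul_of_nonneg_left hs1 hh₂.le
      _ = h₂ := mul_one h₂
  have hPs : |P * (h₂ * s)| ≤ 2 * M * h₂ := by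
    rw [abs_mul, abs_mul, abs_of_pos hh₂]
    calc |P| * (h₂ * |s|) ≤ (2 * M) * h₂ :=
        mul_le_mul hPle hs' (by positivity) (by linarith)
      _ = 2 * M * h₂ := by ring
  have hnum : |a₃ - a₁ - P * (h₂ * s)| ≤ 4 * M * h₂ := by
    calc |a₃ - a₁ - P * (h₂ * s)| ≤ |a₃ - a₁| + |P * (h₂ * s)| := abs_sub _ _
      _ ≤ 4 * M * h₂ := by linarith
  have hQle : |Q| ≤ 4 * M / t := by
    rw [hQ, abs_div, abs_of_pos (by positivity : (0:ℝ) < h₂ * t)]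
    have e : 4 * M / t = (4 * M * h₂) / (h₂ * t) := by field_simp
    rw [e]
    gcongr
  apply max_le
  · calc |P| ≤ 2 * M := hPle
      _ ≤ 4 / t * M := by
        rw [div_mul_eq_mul_div, le_div_iff₀ ht]
        nlinarith
  · calc |Q| ≤ 4 * M / t := hQle
      _ = 4 / t * M := by ring

/-- Stability of Lagrange interpolation under the maximum angle condition: for the
triangle `K` with vertices `p₁ = (0,0)`, `p₂ = (h₁,0)`, `p₃ = (h₂ s, h₂ t)` (the image of
the right triangle `K₁` with legs `h₁ ≥ h₂ > 0` under `A = !![1,s;0,t]`, `s²+t²=1`,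
`t > 0`), whose maximum inner angle `θ_K` is at the vertex `p₁`, the Lagrange interpolant
`I_K^L v : (x,y) ↦ P x + Q y + R` (agreeing with `v` at the vertices) satisfies
`|I_K^L v|_{1,∞,K} ≤ (4 / sin θ_K) |v|_{1,∞,K}`. -/
theorem lagrange_interpolation_stability
    (h₁ h₂ s t : ℝ) (hh₂ : 0 < h₂) (hh : h₂ ≤ h₁) (hst : s ^ 2 + t ^ 2 = 1) (ht : 0 < t)
    (p₁ p₂ p₃ : ℝ × ℝ) (hp₁ : p₁ = (0, 0)) (hp₂ : p₂ = (h₁, 0))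
    (hp₃ : p₃ = (h₂ * s, h₂ * t))
    (K : Set (ℝ × ℝ)) (hK : K = convexHull ℝ {p₁, p₂, p₃})
    (θK : ℝ) (hθ : θK = vecAngle (p₂ - p₁) (p₃ - p₁))
    (hmax₂ : vecAngle (p₁ - p₂) (p₃ - p₂) ≤ θK)
    (hmax₃ : vecAngle (p₁ - p₃) (p₂ - p₃) ≤ θK)
    (v : ℝ × ℝ → ℝ) (U : Set (ℝ × ℝ)) (hU : IsOpen U) (hKU : K ⊆ U)
    (hv : ContDiffOn ℝ 1 v U)
    (P Q R : ℝ)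
    (hI₁ : P * p₁.1 + Q * p₁.2 + R = v p₁)
    (hI₂ : P * p₂.1 + Q * p₂.2 + R = v p₂)
    (hI₃ : P * p₃.1 + Q * p₃.2 + R = v p₃) :
    max |P| |Q| ≤ 4 / Real.sin θK *
      ⨆ z : K, max |fderiv ℝ v (z : ℝ × ℝ) (1, 0)| |fderiv ℝ v (z : ℝ × ℝ) (0, 1)| := by
  have hh₁ : (0:ℝ) < h₁ := lt_of_lt_of_le hh₂ hh
  have ht1 : t ≤ 1 := by nlinarith [sq_nonneg s]
  have hs1 : |s| ≤ 1 := abs_le.2 ⟨by nlinarith, by nlinarith⟩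
  -- sin θK = t
  have hsin : Real.sin θK = t := by
    subst hθ hp₁ hp₂ hp₃
    unfold vecAngle
    have e1 : Real.sqrt (((h₁, (0:ℝ)) - (0, 0)).1 ^ 2 + ((h₁, (0:ℝ)) - (0, 0)).2 ^ 2) = h₁ := by
      simp [Real.sqrt_sq hh₁.le]
    have e2 : Real.sqrt (((h₂ * s, h₂ * t) - ((0:ℝ), (0:ℝ))).1 ^ 2
        + ((h₂ * s, h₂ * t) - ((0:ℝ), (0:ℝ))).2 ^ 2) = h₂ := by
      have : ((h₂ * s, h₂ * t) - ((0:ℝ), (0:ℝ))).1 ^ 2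
          + ((h₂ * s, h₂ * t) - ((0:ℝ), (0:ℝ))).2 ^ 2 = h₂ ^ 2 := by
        simp; nlinarith
      rw [this, Real.sqrt_sq hh₂.le]
    rw [e1, e2]
    have e3 : (((h₁, (0:ℝ)) - (0, 0)).1 * (((h₂ * s, h₂ * t) - ((0:ℝ), (0:ℝ))).1)
        + ((h₁, (0:ℝ)) - (0, 0)).2 * (((h₂ * s, h₂ * t) - ((0:ℝ), (0:ℝ))).2))
        = h₁ * h₂ * s := by simp; ring
    rw [e3]
    have e4 : h₁ * h₂ * s / (h₁ * h₂) = s := by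
      field_simp
    rw [e4, Real.sin_arccos]
    have : 1 - s ^ 2 = t ^ 2 := by linarith
    rw [this, Real.sqrt_sq ht.le]
  -- the set K
  have hKc : Convex ℝ K := hK ▸ convex_convexHull ℝ _
  have hp₁K : p₁ ∈ K := hK ▸ subset_convexHull ℝ _ (by simp)
  have hp₂K : p₂ ∈ K := hK ▸ subset_convexHull ℝ _ (by simp)
  have hp₃K : p₃ ∈ K := hK ▸ subset_convexHull ℝ _ (by simp)
  have hKcomp : IsCompact K := hK ▸ (Set.toFinite _).isCompact_convexHull ℝ
  -- the supremum M
  set M := ⨆ z : K, max |fderiv ℝ v (z : ℝ × ℝ) (1, 0)| |fderiv ℝ v (z : ℝ × ℝ) (0, 1)| with hM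
  have hdiff : ∀ x ∈ K, DifferentiableAt ℝ v x := fun x hx =>
    (hv.differentiableOn one_ne_zero x (hKU hx)).differentiableAt (hU.mem_nhds (hKU hx))
  -- boundedness of the sup
  have hcont : ContinuousOn
      (fun z : ℝ × ℝ => max |fderiv ℝ v z (1, 0)| |fderiv ℝ v z (0, 1)|) K := by
    have h1 : ContinuousOn (fderiv ℝ v) K :=
      (hv.continuousOn_fderiv_of_isOpen hU le_rfl).mono hKU
    have c1 : ContinuousOn (fun z : ℝ × ℝ => fderiv ℝ v z (1, 0)) K := by
      exact (ContinuousLinearMap.apply ℝ ℝ ((1:ℝ), (0:ℝ))).continuous.comp_continuousOn h1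
    have c2 : ContinuousOn (fun z : ℝ × ℝ => fderiv ℝ v z (0, 1)) K := by
      exact (ContinuousLinearMap.apply ℝ ℝ ((0:ℝ), (1:ℝ))).continuous.comp_continuousOn h1
    exact (c1.abs).sup (c2.abs)
  have hbdd : BddAbove (Set.range fun z : K =>
      max |fderiv ℝ v (z : ℝ × ℝ) (1, 0)| |fderiv ℝ v (z : ℝ × ℝ) (0, 1)|) := by
    have hb := (hKcomp.image_of_continuousOn hcont).bddAbove
    have hr : (Set.range fun z : K =>
        max |fderiv ℝ v (z : ℝ × ℝ) (1, 0)| |fderiv ℝ v (z : ℝ × ℝ) (0, 1)|)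
        = (fun z : ℝ × ℝ => max |fderiv ℝ v z (1, 0)| |fderiv ℝ v z (0, 1)|) '' K := by
      ext y
      constructor
      · rintro ⟨⟨x, hx⟩, rfl⟩; exact ⟨x, hx, rfl⟩
      · rintro ⟨x, hx, rfl⟩; exact ⟨⟨x, hx⟩, rfl⟩
    rwa [hr]
  have hMle : ∀ x ∈ K, max |fderiv ℝ v x (1, 0)| |fderiv ℝ v x (0, 1)| ≤ M := by
    intro x hx
    exact le_ciSup hbdd ⟨x, hx⟩
  have hM0 : 0 ≤ M :=
    (abs_nonneg _).trans ((le_max_left _ _).trans (hMle p₁ hp₁K))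
  -- operator norm bound
  have hop : ∀ x ∈ K, ‖fderiv ℝ v x‖ ≤ 2 * M := by
    intro x hx
    apply ContinuousLinearMap.opNorm_le_bound _ (by linarith)
    intro w
    have hw : w = w.1 • ((1:ℝ), (0:ℝ)) + w.2 • ((0:ℝ), (1:ℝ)) := by
      ext <;> simp
    have h1 : |fderiv ℝ v x (1, 0)| ≤ M := le_trans (le_max_left _ _) (hMle x hx)
    have h2 : |fderiv ℝ v x (0, 1)| ≤ M := le_trans (le_max_right _ _) (hMle x hx)
    have hφ : fderiv ℝ v x w = w.1 * fderiv ℝ v x (1, 0) + w.2 * fderiv ℝ v x (0, 1) := by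
      conv_lhs => rw [hw]
      rw [map_add, map_smul, map_smul, smul_eq_mul, smul_eq_mul]
    have hwn : ‖w‖ = max |w.1| |w.2| := by
      rw [Prod.norm_def, Real.norm_eq_abs, Real.norm_eq_abs]
    have hw1 : |w.1| ≤ ‖w‖ := hwn ▸ le_max_left _ _
    have hw2 : |w.2| ≤ ‖w‖ := hwn ▸ le_max_right _ _
    have k1 : |w.1| * |fderiv ℝ v x (1, 0)| ≤ ‖w‖ * M :=
      mul_le_mul hw1 h1 (abs_nonneg _) (norm_nonneg w)
    have k2 : |w.2| * |fderiv ℝ v x (0, 1)| ≤ ‖w‖ * M :=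
      mul_le_mul hw2 h2 (abs_nonneg _) (norm_nonneg w)
    calc ‖fderiv ℝ v x w‖
        = |w.1 * fderiv ℝ v x (1, 0) + w.2 * fderiv ℝ v x (0, 1)| := by
          rw [Real.norm_eq_abs, hφ]
      _ ≤ |w.1 * fderiv ℝ v x (1, 0)| + |w.2 * fderiv ℝ v x (0, 1)| := abs_add_le _ _
      _ = |w.1| * |fderiv ℝ v x (1, 0)| + |w.2| * |fderiv ℝ v x (0, 1)| := by
          rw [abs_mul, abs_mul]
      _ ≤ ‖w‖ * M + ‖w‖ * M := add_le_add k1 k2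
      _ = 2 * M * ‖w‖ := by ring
  -- mean value inequality
  have hmvt : ∀ a ∈ K, ∀ b ∈ K, |v b - v a| ≤ 2 * M * ‖b - a‖ := by
    intro a ha b hb
    have := Convex.norm_image_sub_le_of_norm_hasFDerivWithin_le
      (f := v) (f' := fderiv ℝ v) (s := K)
      (fun x hx => (hdiff x hx).hasFDerivAt.hasFDerivWithinAt) hop hKc ha hb
    simpa [Real.norm_eq_abs] using this
  -- compute P, Q, R and estimate
  subst hp₁ hp₂ hp₃
  have hI₁' : P * 0 + Q * 0 + R = v (0, 0) := hI₁
  have hI₂' : P * h₁ + Q * 0 + R = v (h₁, 0) := hI₂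
  have hI₃' : P * (h₂ * s) + Q * (h₂ * t) + R = v (h₂ * s, h₂ * t) := hI₃
  have hR : R = v (0, 0) := by linarith
  have hP : P = (v (h₁, 0) - v (0, 0)) / h₁ := by
    rw [eq_div_iff hh₁.ne']; linarith
  have hn2 : ‖((h₁, 0) - ((0:ℝ), (0:ℝ)) : ℝ × ℝ)‖ = h₁ := by
    have e : ((h₁, (0:ℝ)) - (0, 0) : ℝ × ℝ) = (h₁, 0) := by ext <;> simp
    rw [e, Prod.norm_def]
    simp [Real.norm_eq_abs, abs_of_nonneg hh₁.le, hh₁.le]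
  have h21 : |v (h₁, 0) - v (0, 0)| ≤ 2 * M * h₁ := by
    have h := hmvt (0, 0) hp₁K (h₁, 0) hp₂K
    rwa [hn2] at h
  have hPle : |P| ≤ 2 * M := by
    rw [hP, abs_div, abs_of_pos hh₁, div_le_iff₀ hh₁]
    linarith
  have hn3 : ‖((h₂ * s, h₂ * t) - ((0:ℝ), (0:ℝ)) : ℝ × ℝ)‖ ≤ h₂ := by
    have e : ((h₂ * s, h₂ * t) - ((0:ℝ), (0:ℝ)) : ℝ × ℝ) = (h₂ * s, h₂ * t) := by
      ext <;> simp
    rw [e, Prod.norm_def]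
    apply max_le
    · rw [Real.norm_eq_abs, abs_mul, abs_of_pos hh₂]
      nlinarith [abs_nonneg s]
    · rw [Real.norm_eq_abs, abs_mul, abs_of_pos hh₂, abs_of_pos ht]
      nlinarith
  have h31 : |v (h₂ * s, h₂ * t) - v (0, 0)| ≤ 2 * M * h₂ := by
    calc |v (h₂ * s, h₂ * t) - v (0, 0)|
        ≤ 2 * M * ‖((h₂ * s, h₂ * t) - ((0:ℝ), (0:ℝ)) : ℝ × ℝ)‖ :=
          hmvt (0, 0) hp₁K (h₂ * s, h₂ * t) hp₃K
      _ ≤ 2 * M * h₂ := mul_le_mul_of_nonneg_left hn3 (by linarith)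
  rw [hsin]
  exact lagrange_coeff_bound h₁ h₂ s t M P Q R _ _ _ hh₂ hh hst ht hM0 h21 h31 hI₁' hI₂' hI₃'
end
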